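/- arXiv:2505.15569 — 8 statements merged into one kernel-verified Lean document; each statement's English description precedes it below -/
import Mathlib

section
/- For every a ∈ ι, τ(e a ⊗ e a) = −(e a ⊗ e a); and for all a,b ∈ ι with a < b, τ(e a ⊗ e b + e b ⊗ e a) = −(e a ⊗ e b + e b ⊗ e a) and τ(e a ⊗ e b − p·(e b ⊗ e a)) = p·(e a ⊗ e b − p·(e b ⊗ e a)). In particular the vectors e a ⊗ e a and e a ⊗ e b + e b ⊗ e a (a < b) are eigenvectors of τ with eigenvalue −1, and the vectors e a ⊗ e b − p·(e b ⊗ e a) (a < b) are eigenvectors with eigenvalue p. -/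
open scoped TensorProduct

/-- Heaviside theta symbol: `theta a b = 1` if `a > b`, else `0`. -/
def theta {ι : Type*} [LinearOrder ι] (a b : ι) : ℕ := if b < a then 1 else 0

set_option maxHeartbeats 1600000 in
/-- The vectors `e a ⊗ e a` and `e a ⊗ e b + e b ⊗ e a` (for `a < b`) are eigenvectors of `τ`
with eigenvalue `−1`, and the vectors `e a ⊗ e b − p·(e b ⊗ e a)` (for `a < b`) are
eigenvectors of `τ` with eigenvalue `p`. -/
theorem tau_eigenvectors (F : Type*) [Field F] (p : F) (ι : Type*) [LinearOrder ι]
    (τ : ((ι →₀ F) ⊗[F] (ι →₀ F)) →ₗ[F] ((ι →₀ F) ⊗[F] (ι →₀ F)))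
    (hτ : ∀ a b : ι,
      τ (Finsupp.single a 1 ⊗ₜ[F] Finsupp.single b 1) =
        (p ^ theta a b - 1) • (Finsupp.single a 1 ⊗ₜ[F] Finsupp.single b 1)
          - p ^ theta b a • (Finsupp.single b 1 ⊗ₜ[F] Finsupp.single a 1)) :
    (∀ a : ι,
      τ (Finsupp.single a 1 ⊗ₜ[F] Finsupp.single a 1) =
        -(Finsupp.single a 1 ⊗ₜ[F] Finsupp.single a (1 : F))) ∧
    (∀ a b : ι, a < b →
      τ (Finsupp.single a 1 ⊗ₜ[F] Finsupp.single b 1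
          + Finsupp.single b 1 ⊗ₜ[F] Finsupp.single a 1) =
        -(Finsupp.single a 1 ⊗ₜ[F] Finsupp.single b 1
          + Finsupp.single b 1 ⊗ₜ[F] Finsupp.single a (1 : F))) ∧
    (∀ a b : ι, a < b →
      τ (Finsupp.single a 1 ⊗ₜ[F] Finsupp.single b 1
          - p • (Finsupp.single b 1 ⊗ₜ[F] Finsupp.single a 1)) =
        p • (Finsupp.single a 1 ⊗ₜ[F] Finsupp.single b 1
          - p • (Finsupp.single b 1 ⊗ₜ[F] Finsupp.single a (1 : F)))) := by
  refine ⟨fun a => ?_, fun a b h => ?_, fun a b h => ?_⟩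
  · rw [hτ]
    simp [theta]
  · rw [map_add, hτ, hτ]
    simp only [theta, if_pos h, if_neg (not_lt.mpr h.le), pow_one, pow_zero]
    module
  · rw [map_sub, map_smul, hτ, hτ]
    simp only [theta, if_pos h, if_neg (not_lt.mpr h.le), pow_one, pow_zero]
    module
end

section
/- The map τ satisfies the Yang–Baxter equation on V ⊗ V ⊗ V: (τ ⊗ id_V) ∘ (id_V ⊗ τ) ∘ (τ ⊗ id_V) = (id_V ⊗ τ) ∘ (τ ⊗ id_V) ∘ (id_V ⊗ τ), where the two maps are compared after identifying (V ⊗ V) ⊗ V with V ⊗ (V ⊗ V) via the canonical associator. -/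
open scoped TensorProduct

set_option maxSynthPendingDepth 2

set_option synthInstance.maxHeartbeats 1000000
set_option maxHeartbeats 4000000

theorem theta_of_lt {ι : Type*} [LinearOrder ι] {a b : ι} (h : a < b) : theta a b = 0 := if_neg (asymm h)
theorem theta_of_gt {ι : Type*} [LinearOrder ι] {a b : ι} (h : b < a) : theta a b = 1 := if_pos h
theorem theta_self {ι : Type*} [LinearOrder ι] (a : ι) : theta a a = 0 := if_neg (lt_irrefl a)

/-- `τ` satisfies the Yang–Baxter equation on `V ⊗ V ⊗ V`:
`(τ ⊗ id) ∘ (id ⊗ τ) ∘ (τ ⊗ id) = (id ⊗ τ) ∘ (τ ⊗ id) ∘ (id ⊗ τ)`, where `id ⊗ τ` is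
transported to `(V ⊗ V) ⊗ V` via the canonical associator. -/
theorem tau_yang_baxter (F : Type*) [Field F] (p : F) (ι : Type*) [LinearOrder ι]
    (τ : ((ι →₀ F) ⊗[F] (ι →₀ F)) →ₗ[F] ((ι →₀ F) ⊗[F] (ι →₀ F)))
    (hτ : ∀ a b : ι,
      τ (Finsupp.single a 1 ⊗ₜ[F] Finsupp.single b 1) =
        (p ^ theta a b - 1) • (Finsupp.single a 1 ⊗ₜ[F] Finsupp.single b 1)
          - p ^ theta b a • (Finsupp.single b 1 ⊗ₜ[F] Finsupp.single a 1)) :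
    (LinearMap.rTensor (ι →₀ F) τ) ∘ₗ
        ((TensorProduct.assoc F (ι →₀ F) (ι →₀ F) (ι →₀ F)).symm.toLinearMap ∘ₗ
          LinearMap.lTensor (ι →₀ F) τ ∘ₗ
          (TensorProduct.assoc F (ι →₀ F) (ι →₀ F) (ι →₀ F)).toLinearMap) ∘ₗ
        (LinearMap.rTensor (ι →₀ F) τ) =
      ((TensorProduct.assoc F (ι →₀ F) (ι →₀ F) (ι →₀ F)).symm.toLinearMap ∘ₗ
          LinearMap.lTensor (ι →₀ F) τ ∘ₗ
          (TensorProduct.assoc F (ι →₀ F) (ι →₀ F) (ι →₀ F)).toLinearMap) ∘ₗ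
        (LinearMap.rTensor (ι →₀ F) τ) ∘ₗ
        ((TensorProduct.assoc F (ι →₀ F) (ι →₀ F) (ι →₀ F)).symm.toLinearMap ∘ₗ
          LinearMap.lTensor (ι →₀ F) τ ∘ₗ
          (TensorProduct.assoc F (ι →₀ F) (ι →₀ F) (ι →₀ F)).toLinearMap) := by
  ext a b c
  simp only [TensorProduct.AlgebraTensorModule.curry_apply, TensorProduct.curry_apply,
    LinearMap.coe_comp, LinearMap.coe_restrictScalars, Function.comp_apply,
    Finsupp.lsingle_apply, LinearEquiv.coe_coe, LinearMap.rTensor_tmul,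
    LinearMap.lTensor_tmul, TensorProduct.assoc_tmul, TensorProduct.assoc_symm_tmul, hτ,
    map_sub, map_smul, TensorProduct.sub_tmul, TensorProduct.tmul_sub,
    ← TensorProduct.smul_tmul', TensorProduct.tmul_smul, LinearMap.id_coe, id_eq]
  rcases lt_trichotomy a b with hab|rfl|hab
  · rcases lt_trichotomy b c with hbc|rfl|hbc
    · have hac := hab.trans hbc
      simp only [theta_of_lt, theta_of_gt, theta_self, pow_zero, pow_one, *]
      try module
    · simp only [theta_of_lt, theta_of_gt, theta_self, pow_zero, pow_one, *]
      try module
    · rcases lt_trichotomy a c with hac|rfl|hac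
      · simp only [theta_of_lt, theta_of_gt, theta_self, pow_zero, pow_one, *]
        try module
      · simp only [theta_of_lt, theta_of_gt, theta_self, pow_zero, pow_one, *]
        try module
      · simp only [theta_of_lt, theta_of_gt, theta_self, pow_zero, pow_one, *]
        try module
  · rcases lt_trichotomy a c with hac|rfl|hac
    · simp only [theta_of_lt, theta_of_gt, theta_self, pow_zero, pow_one, *]
      try module
    · simp only [theta_of_lt, theta_of_gt, theta_self, pow_zero, pow_one, *]
      try module
    · simp only [theta_of_lt, theta_of_gt, theta_self, pow_zero, pow_one, *]
      try module
  · rcases lt_trichotomy b c with hbc|rfl|hbc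
    · rcases lt_trichotomy a c with hac|rfl|hac
      · simp only [theta_of_lt, theta_of_gt, theta_self, pow_zero, pow_one, *]
        try module
      · simp only [theta_of_lt, theta_of_gt, theta_self, pow_zero, pow_one, *]
        try module
      · simp only [theta_of_lt, theta_of_gt, theta_self, pow_zero, pow_one, *]
        try module
    · simp only [theta_of_lt, theta_of_gt, theta_self, pow_zero, pow_one, *]
      try module
    · have hac := hbc.trans hab
      simp only [theta_of_lt, theta_of_gt, theta_self, pow_zero, pow_one, *]
      try module
end

section
/- If p ≠ 0, then τ is a linear automorphism of V ⊗ V, with inverse p⁻¹·(τ − (p − 1)·id); that is, τ ∘ (p⁻¹·(τ − (p−1)·id)) = id and (p⁻¹·(τ − (p−1)·id)) ∘ τ = id. -/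
open scoped TensorProduct

set_option maxSynthPendingDepth 2

/-- If `p ≠ 0`, then `τ` is invertible on `V ⊗ V`, with inverse `p⁻¹·(τ − (p−1)·id)`. -/
theorem tau_invertible (F : Type*) [Field F] (p : F) (hp : p ≠ 0) (ι : Type*) [LinearOrder ι]
    (τ : ((ι →₀ F) ⊗[F] (ι →₀ F)) →ₗ[F] ((ι →₀ F) ⊗[F] (ι →₀ F)))
    (hτ : ∀ a b : ι,
      τ (Finsupp.single a 1 ⊗ₜ[F] Finsupp.single b 1) =
        (p ^ theta a b - 1) • (Finsupp.single a 1 ⊗ₜ[F] Finsupp.single b 1)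
          - p ^ theta b a • (Finsupp.single b 1 ⊗ₜ[F] Finsupp.single a 1)) :
    τ ∘ₗ (p⁻¹ • (τ - (p - 1) •
        (LinearMap.id : ((ι →₀ F) ⊗[F] (ι →₀ F)) →ₗ[F] ((ι →₀ F) ⊗[F] (ι →₀ F))))) =
      LinearMap.id ∧
    (p⁻¹ • (τ - (p - 1) •
        (LinearMap.id : ((ι →₀ F) ⊗[F] (ι →₀ F)) →ₗ[F] ((ι →₀ F) ⊗[F] (ι →₀ F))))) ∘ₗ τ =
      LinearMap.id := by
  have hecke : τ ∘ₗ τ = (p - 1) • τ + p • LinearMap.id := by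
    ext a b
    simp only [LinearMap.comp_apply, LinearMap.compr₂_apply, TensorProduct.mk_apply,
      LinearMap.add_apply, LinearMap.smul_apply, LinearMap.id_apply,
      TensorProduct.AlgebraTensorModule.curry_apply, TensorProduct.curry_apply,
      LinearMap.coe_restrictScalars, Finsupp.lsingle_apply]
    rw [hτ a b, map_sub, map_smul, map_smul, hτ a b, hτ b a]
    rcases lt_trichotomy a b with h | h | h
    · have h1 : theta a b = 0 := by simp [theta, not_lt.2 h.le]
      have h2 : theta b a = 1 := by simp [theta, h]
      rw [h1, h2]
      simp only [pow_zero, pow_one]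
      module
    · subst h
      have h1 : theta a a = 0 := by simp [theta]
      rw [h1]
      simp only [pow_zero]
      module
    · have h1 : theta a b = 1 := by simp [theta, h]
      have h2 : theta b a = 0 := by simp [theta, not_lt.2 h.le]
      rw [h1, h2]
      simp only [pow_zero, pow_one]
      module
  constructor
  · refine LinearMap.ext fun x => ?_
    have h2 := LinearMap.congr_fun hecke x
    simp only [LinearMap.comp_apply, LinearMap.smul_apply, LinearMap.sub_apply,
      LinearMap.id_apply, LinearMap.add_apply] at h2 ⊢
    rw [map_smul, map_sub, map_smul, h2, add_sub_cancel_left, smul_smul,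
      inv_mul_cancel₀ hp, one_smul]
  · refine LinearMap.ext fun x => ?_
    have h2 := LinearMap.congr_fun hecke x
    simp only [LinearMap.comp_apply, LinearMap.smul_apply, LinearMap.sub_apply,
      LinearMap.id_apply, LinearMap.add_apply] at h2 ⊢
    rw [h2, add_sub_cancel_left, smul_smul, inv_mul_cancel₀ hp, one_smul]
end

section
/- Let R be a commutative ring, p ∈ R, and let E be a finite subset of a linearly ordered type ι with |E| = n. Then for every 0 ≤ k ≤ n, Σ_{A ⊆ E, |A| = k} p^{θ(A, E∖A)} = [n choose k]_p, and likewise Σ_{A ⊆ E, |A| = k} p^{θ(E∖A, A)} = [n choose k]_p. -/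
/-- Heaviside theta symbol for finite sets: the number of pairs `(a, b) ∈ A × B` with `a > b`. -/
def Theta {ι : Type*} [LinearOrder ι] (A B : Finset ι) : ℕ :=
  ∑ a ∈ A, ∑ b ∈ B, if b < a then 1 else 0

/-- Gaussian (q-)binomial coefficient `[n choose k]_p`, determined by
`[n choose 0]_p = 1`, `[0 choose k+1]_p = 0`, and
`[n+1 choose k+1]_p = [n choose k+1]_p + p^{n−k}·[n choose k]_p`. -/
def qbinom {R : Type*} [CommRing R] (p : R) : ℕ → ℕ → R
  | _, 0 => 1
  | 0, _ + 1 => 0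
  | n + 1, k + 1 => qbinom p n (k + 1) + p ^ (n - k) * qbinom p n k

lemma Theta_empty_left {ι : Type*} [LinearOrder ι] (B : Finset ι) : Theta ∅ B = 0 := by
  simp [Theta]

lemma Theta_insert_right {ι : Type*} [LinearOrder ι] (A B : Finset ι) (m : ι) (hm : m ∉ B)
    (hmax : ∀ a ∈ A, a ≤ m) : Theta A (insert m B) = Theta A B := by
  unfold Theta
  refine Finset.sum_congr rfl fun a ha => ?_
  rw [Finset.sum_insert hm, if_neg (not_lt.2 (hmax a ha))]
  ring

lemma Theta_insert_left {ι : Type*} [LinearOrder ι] (A B : Finset ι) (m : ι) (hm : m ∉ A)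
    (hmax : ∀ b ∈ B, b < m) : Theta (insert m A) B = Theta A B + B.card := by
  unfold Theta
  rw [Finset.sum_insert hm]
  have : (∑ b ∈ B, if b < m then 1 else 0) = B.card := by
    rw [Finset.sum_congr rfl fun b hb => if_pos (hmax b hb)]
    simp
  omega

lemma key {ι : Type*} [LinearOrder ι] {R : Type*} [CommRing R] (p : R) :
    ∀ (n : ℕ) (E : Finset ι), E.card = n → ∀ k,
      (∑ A ∈ E.powersetCard k, p ^ Theta A (E \ A)) = qbinom p n k := by
  intro n
  induction n with
  | zero =>
    intro E hE k
    rw [Finset.card_eq_zero.1 hE]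
    cases k with
    | zero => simp [qbinom, Theta_empty_left]
    | succ k => rw [Finset.powersetCard_eq_empty.2 (by simp)]; simp [qbinom]
  | succ m ih =>
    intro E hE k
    cases k with
    | zero => simp [qbinom, Theta_empty_left]
    | succ k =>
      have hne : E.Nonempty := Finset.card_pos.1 (by omega)
      set a := E.max' hne with ha
      have haE : a ∈ E := E.max'_mem hne
      set E' := E.erase a with hE'
      have haE' : a ∉ E' := Finset.notMem_erase _ _
      have hEins : E = insert a E' := (Finset.insert_erase haE).symm
      have hcard : E'.card = m := by
        simp [hE', Finset.card_erase_of_mem haE, hE]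
      rw [hEins, Finset.powersetCard_succ_insert haE']
      have hdisj : Disjoint (E'.powersetCard (k+1))
          ((E'.powersetCard k).image (insert a)) := by
        rw [Finset.disjoint_left]
        intro A hA hA'
        obtain ⟨B, hB, rfl⟩ := Finset.mem_image.1 hA'
        have hBsub := Finset.mem_powersetCard.1 hA
        exact haE' (hBsub.1 (Finset.mem_insert_self a B))
      rw [Finset.sum_union hdisj]
      have h1 : (∑ A ∈ E'.powersetCard (k+1), p ^ Theta A (insert a E' \ A))
          = qbinom p m (k+1) := by
        rw [← ih E' hcard (k+1)]
        refine Finset.sum_congr rfl fun A hA => ?_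
        have hAsub : A ⊆ E' := (Finset.mem_powersetCard.1 hA).1
        have haA : a ∉ A := fun h => haE' (hAsub h)
        have hsd : insert a E' \ A = insert a (E' \ A) := by
          rw [Finset.insert_sdiff_of_notMem _ haA]
        rw [hsd, Theta_insert_right A (E' \ A) a
          (fun h => haE' (Finset.sdiff_subset h))
          (fun x hx => E.le_max' x ((Finset.erase_subset _ _) (hAsub hx)))]
      have h2 : (∑ A ∈ (E'.powersetCard k).image (insert a),
            p ^ Theta A (insert a E' \ A)) = p ^ (m - k) * qbinom p m k := by
        rw [Finset.sum_image (fun B hB C hC h => by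
          have hB' : a ∉ B := fun hh => haE' ((Finset.mem_powersetCard.1 hB).1 hh)
          have hC' : a ∉ C := fun hh => haE' ((Finset.mem_powersetCard.1 hC).1 hh)
          rw [← Finset.erase_insert hB', ← Finset.erase_insert hC', h])]
        rw [← ih E' hcard k, Finset.mul_sum]
        refine Finset.sum_congr rfl fun A hA => ?_
        have hAmem := Finset.mem_powersetCard.1 hA
        have hAsub : A ⊆ E' := hAmem.1
        have haA : a ∉ A := fun h => haE' (hAsub h)
        have hsd : insert a E' \ insert a A = E' \ A := by
          rw [Finset.insert_sdiff_insert]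
          rw [Finset.sdiff_eq_sdiff_iff_inter_eq_inter]
          ext x
          simp only [Finset.mem_inter, Finset.mem_insert]
          constructor
          · rintro ⟨hx, h | h⟩
            · exact absurd hx (h ▸ haE')
            · exact ⟨hx, h⟩
          · rintro ⟨hx, h⟩; exact ⟨hx, Or.inr h⟩
        have hlt : ∀ b ∈ E' \ A, b < a := by
          intro b hb
          have hbE : b ∈ E := (Finset.erase_subset _ _) (Finset.sdiff_subset hb)
          have hba : b ≠ a := fun h => haE' (h ▸ Finset.sdiff_subset hb)
          exact lt_of_le_of_ne (E.le_max' b hbE) hba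
        rw [hsd, Theta_insert_left A (E' \ A) a haA hlt,
          Finset.card_sdiff_of_subset hAsub, hcard, hAmem.2, pow_add, mul_comm]
      rw [h1, h2]
      rfl

lemma Theta_dual {ι : Type*} [LinearOrder ι] (A B : Finset ι) :
    Theta (ι := ιᵒᵈ) A B = Theta B A := by
  unfold Theta
  rw [Finset.sum_comm]
  rfl

/-- For `|E| = n` and `k ≤ n`, `Σ_{A ⊆ E, |A| = k} p^{θ(A, E∖A)} = [n choose k]_p`, and
likewise with `θ(E∖A, A)`. -/
theorem sum_pow_Theta_eq_qbinom (R : Type*) [CommRing R] (p : R)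
    (ι : Type*) [LinearOrder ι] (E : Finset ι) (n k : ℕ) (hE : E.card = n) (hk : k ≤ n) :
    (∑ A ∈ E.powersetCard k, p ^ Theta A (E \ A)) = qbinom p n k ∧
    (∑ A ∈ E.powersetCard k, p ^ Theta (E \ A) A) = qbinom p n k := by
  constructor
  · exact key p n E hE k
  · have h := key (ι := ιᵒᵈ) p n E hE k
    rw [← h]
    refine Finset.sum_congr rfl fun A hA => ?_
    congr 1
    refine Eq.trans ?_ (Theta_dual (ι := ι) _ _).symm
    congr 1
end

section
/- Let F be a field and p ∈ F with p ≠ 0 and p^n ≠ 1 for every positive integer n. Then for all natural numbers i, j: Σ_{k=0}^{i} Σ_{l=0}^{j} [i choose k]_p · ((p^{i−j−k}; p)_l / (p;p)_l) · (−1)^k · p^{k(k−1)/2} · p^l equals 1 if i = j and 0 otherwise, where p^{i−j−k} denotes the integer power of p (i−j−k may be negative). -/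
/-- q-Pochhammer symbol `(x; p)_n = Π_{s=0}^{n−1} (1 − x·p^s)`. -/
def qpoch {R : Type*} [CommRing R] (x p : R) (n : ℕ) : R :=
  ∏ s ∈ Finset.range n, (1 - x * p ^ s)

section Aux

variable {F : Type*} [Field F] (p : F)

lemma qbinom_zero_right (n : ℕ) : qbinom p n 0 = 1 := by cases n <;> rfl

lemma qbinom_succ_succ (n k : ℕ) :
    qbinom p (n + 1) (k + 1) = qbinom p n (k + 1) + p ^ (n - k) * qbinom p n k := rfl

lemma qbinom_of_lt {n k : ℕ} (h : n < k) : qbinom p n k = 0 := by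
  induction n generalizing k with
  | zero => cases k with
    | zero => omega
    | succ k => rfl
  | succ n ih => cases k with
    | zero => omega
    | succ k =>
      rw [qbinom_succ_succ, ih (by omega), ih (by omega), mul_zero, add_zero]

lemma qbinom_self (n : ℕ) : qbinom p n n = 1 := by
  induction n with
  | zero => rfl
  | succ n ih =>
    rw [qbinom_succ_succ, qbinom_of_lt p (Nat.lt_succ_self n), ih, Nat.sub_self, pow_zero,
      zero_add, mul_one]

lemma qpoch_zero (x : F) : qpoch x p 0 = 1 := by simp [qpoch]

lemma qpoch_succ (x : F) (n : ℕ) : qpoch x p (n + 1) = qpoch x p n * (1 - x * p ^ n) :=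
  Finset.prod_range_succ _ n

lemma qpoch_succ' (x : F) (n : ℕ) : qpoch x p (n + 1) = (1 - x) * qpoch (x * p) p n := by
  rw [qpoch, Finset.prod_range_succ', qpoch]
  simp only [pow_zero, mul_one]
  rw [mul_comm]
  congr 1
  exact Finset.prod_congr rfl fun s _ => by ring

lemma qpoch_p_ne_zero (hp : ∀ n : ℕ, 0 < n → p ^ n ≠ 1) (n : ℕ) : qpoch p p n ≠ 0 := by
  rw [qpoch]
  refine Finset.prod_ne_zero_iff.mpr fun s _ h => ?_
  have : (p : F) * p ^ s = p ^ (s + 1) := by ring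
  rw [this] at h
  exact hp (s + 1) (Nat.succ_pos s) (sub_eq_zero.mp h).symm

lemma qpoch_one_eq_zero {n : ℕ} (h : 0 < n) : qpoch (1 : F) p n = 0 :=
  Finset.prod_eq_zero (Finset.mem_range.mpr h) (by simp)

lemma qpoch_sum (hp : ∀ n : ℕ, 0 < n → p ^ n ≠ 1) (x : F) (j : ℕ) :
    ∑ l ∈ Finset.range (j + 1), qpoch x p l / qpoch p p l * p ^ l
      = qpoch (x * p) p j / qpoch p p j := by
  induction j with
  | zero => simp [qpoch]
  | succ j ih =>
    rw [Finset.sum_range_succ, ih, qpoch_succ p (x * p) j, qpoch_succ p p j, qpoch_succ' p x j]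
    have h1 := qpoch_p_ne_zero p hp j
    have h2 : (1 : F) - p * p ^ j ≠ 0 := by
      rw [show (p : F) * p ^ j = p ^ (j + 1) by ring]
      intro h
      exact hp (j + 1) (Nat.succ_pos j) (sub_eq_zero.mp h).symm
    field_simp
    ring

lemma qpoch_pascal (a : F) (j : ℕ) :
    qpoch (a * p) p (j + 1) = qpoch a p (j + 1) + a * (1 - p * p ^ j) * qpoch (a * p) p j := by
  rw [qpoch_succ, qpoch_succ']
  ring

lemma key_G (hp0 : p ≠ 0) : ∀ j n : ℕ, qpoch (p ^ ((n : ℤ) - (j : ℤ) + 1)) p j = qbinom p n j * qpoch p p j := by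
  intro j
  induction j with
  | zero => intro n; simp [qpoch, qbinom_zero_right]
  | succ j ihj =>
    intro n
    induction n with
    | zero =>
      rw [qbinom_of_lt p (Nat.succ_pos j), zero_mul]
      refine Finset.prod_eq_zero (Finset.self_mem_range_succ j) ?_
      have : (p : F) ^ (((0:ℕ) : ℤ) - ((j + 1 : ℕ) : ℤ) + 1) * p ^ j = 1 := by
        rw [← zpow_natCast p j, ← zpow_add₀ hp0]
        rw [show ((0:ℕ) : ℤ) - ((j + 1 : ℕ) : ℤ) + 1 + (j : ℤ) = 0 by push_cast; ring, zpow_zero]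
      rw [this, sub_self]
    | succ m ihm =>
      have h1 : (p : F) ^ ((m : ℤ) - j) * p = p ^ ((m : ℤ) - j + 1) := by
        rw [zpow_add₀ hp0, zpow_one]
      have h2 : qpoch (p ^ ((m : ℤ) - (j : ℤ))) p (j + 1) = qbinom p m (j + 1) * qpoch p p (j + 1) := by
        have h := ihm
        rwa [show ((m : ℤ) - ((j : ℕ) + 1 : ℕ) + 1) = (m : ℤ) - j by push_cast; ring] at h
      have h3 : qpoch (p ^ ((m : ℤ) - j + 1)) p j = qbinom p m j * qpoch p p j := ihj m
      have h4 : (p : F) ^ ((m : ℤ) - j) * qbinom p m j = p ^ (m - j) * qbinom p m j := by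
        rcases le_or_gt j m with h | h
        · congr 1
          rw [← zpow_natCast p (m - j)]
          congr 1
          omega
        · rw [qbinom_of_lt p h, mul_zero, mul_zero]
      rw [show (((m : ℕ) + 1 : ℕ) : ℤ) - (((j : ℕ) + 1 : ℕ) : ℤ) + 1 = (m : ℤ) - j + 1 by
        push_cast; ring]
      rw [← h1, qpoch_pascal, h1, h3, h2, qbinom_succ_succ, qpoch_succ p p j]
      linear_combination (1 - p * p ^ j) * qpoch p p j * h4

lemma qpoch_split (m k : ℕ) : qpoch p p (m + k) = qpoch p p m * qpoch (p ^ (m + 1)) p k := by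
  induction k with
  | zero => simp [qpoch]
  | succ k ih =>
    rw [show m + (k + 1) = (m + k) + 1 from rfl, qpoch_succ, ih, qpoch_succ]
    ring

lemma qbinom_mul (hp0 : p ≠ 0) {k n : ℕ} (hk : k ≤ n) :
    qbinom p n k * qpoch p p k * qpoch p p (n - k) = qpoch p p n := by
  have h1 : qpoch p p n = qpoch p p (n - k) * qpoch ((p : F) ^ (n - k + 1)) p k := by
    rw [← qpoch_split]
    congr 1
    omega
  have h2 : ((p : F) ^ (n - k + 1)) = p ^ ((n : ℤ) - (k : ℤ) + 1) := by
    rw [← zpow_natCast]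
    congr 1
    omega
  rw [h1, h2, key_G p hp0 k n]
  ring

lemma qbinom_eq_div (hp0 : p ≠ 0) (hp : ∀ n : ℕ, 0 < n → p ^ n ≠ 1) {k n : ℕ} (hk : k ≤ n) :
    qbinom p n k = qpoch p p n / (qpoch p p k * qpoch p p (n - k)) := by
  have h1 := qpoch_p_ne_zero p hp k
  have h2 := qpoch_p_ne_zero p hp (n - k)
  rw [← qbinom_mul p hp0 hk]
  field_simp

lemma revision (hp0 : p ≠ 0) (hp : ∀ n : ℕ, 0 < n → p ^ n ≠ 1) {i k : ℕ} (j : ℕ) (hk : k ≤ i) :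
    qbinom p i k * qbinom p (i - k) j = qbinom p i j * qbinom p (i - j) k := by
  by_cases hj : k + j ≤ i
  · have e1 : i - k - j = i - j - k := by omega
    rw [qbinom_eq_div p hp0 hp hk, qbinom_eq_div p hp0 hp (show j ≤ i - k by omega),
      qbinom_eq_div p hp0 hp (show j ≤ i by omega),
      qbinom_eq_div p hp0 hp (show k ≤ i - j by omega), e1]
    have n1 := qpoch_p_ne_zero p hp i
    have n2 := qpoch_p_ne_zero p hp k
    have n3 := qpoch_p_ne_zero p hp j
    have n4 := qpoch_p_ne_zero p hp (i - k)
    have n5 := qpoch_p_ne_zero p hp (i - j)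
    have n6 := qpoch_p_ne_zero p hp (i - j - k)
    field_simp
  · have h1 : qbinom p (i - k) j = 0 := qbinom_of_lt p (by omega)
    have h2 : qbinom p i j * qbinom p (i - j) k = 0 := by
      rcases le_or_gt j i with h | h
      · rw [qbinom_of_lt p (show i - j < k by omega), mul_zero]
      · rw [qbinom_of_lt p h, zero_mul]
    rw [h1, mul_zero, h2]

lemma tri (k : ℕ) : (k + 1) * k / 2 = k * (k - 1) / 2 + k := by
  have h1 : (k + 1).choose 2 = k.choose 1 + k.choose 2 := Nat.choose_succ_succ k 1
  rw [Nat.choose_two_right, Nat.choose_two_right, Nat.choose_one_right] at h1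
  simp only [Nat.add_sub_cancel] at h1
  rw [h1, Nat.add_comm]

lemma alt_sum (m : ℕ) :
    ∑ k ∈ Finset.range (m + 1), qbinom p m k * ((-1 : F) ^ k * p ^ (k * (k - 1) / 2))
      = qpoch 1 p m := by
  induction m with
  | zero => simp [qbinom_zero_right, qpoch]
  | succ m ih =>
    rw [Finset.sum_range_succ']
    have key : ∀ k ∈ Finset.range (m + 1),
        qbinom p (m + 1) (k + 1) * ((-1 : F) ^ (k + 1) * p ^ ((k + 1) * ((k + 1) - 1) / 2))
          = qbinom p m (k + 1) * ((-1 : F) ^ (k + 1) * p ^ ((k + 1) * ((k + 1) - 1) / 2))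
            + (-(p ^ m)) * (qbinom p m k * ((-1 : F) ^ k * p ^ (k * (k - 1) / 2))) := by
      intro k hk
      have hk' : k ≤ m := by
        have := Finset.mem_range.mp hk
        omega
      rw [qbinom_succ_succ]
      have e0 : (k + 1) * ((k + 1) - 1) / 2 = k * (k - 1) / 2 + k := by
        simpa using tri k
      rw [e0, pow_add]
      rw [show (p : F) ^ m = p ^ (m - k) * p ^ k by rw [← pow_add]; congr 1; omega]
      ring
    rw [Finset.sum_congr rfl key, Finset.sum_add_distrib, ← Finset.mul_sum, ih]
    have hS : ∑ k ∈ Finset.range (m + 1),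
        qbinom p m (k + 1) * ((-1 : F) ^ (k + 1) * p ^ ((k + 1) * ((k + 1) - 1) / 2))
          = qpoch 1 p m - 1 := by
      have h0 := Finset.sum_range_succ'
        (fun k => qbinom p m k * ((-1 : F) ^ k * p ^ (k * (k - 1) / 2))) (m + 1)
      have h2 : ∑ k ∈ Finset.range (m + 2),
          qbinom p m k * ((-1 : F) ^ k * p ^ (k * (k - 1) / 2)) = qpoch 1 p m := by
        rw [Finset.sum_range_succ, qbinom_of_lt p (Nat.lt_succ_self m), zero_mul, add_zero, ih]
      simp only [qbinom_zero_right, pow_zero, Nat.zero_mul, Nat.zero_div, one_mul, mul_one] at h0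
      rw [h2] at h0
      linear_combination -h0
    rw [hS, qbinom_zero_right, qpoch_succ]
    simp only [pow_zero, Nat.zero_mul, Nat.zero_div, one_mul, mul_one]
    ring

end Aux

/-- The summation formula
`Σ_{k=0}^{i} Σ_{l=0}^{j} [i choose k]_p ((p^{i−j−k};p)_l/(p;p)_l) (−1)^k p^{k(k−1)/2} p^l = δ_{i,j}`,
for `p` neither zero nor a root of unity. -/
theorem delta_summation_formula (F : Type*) [Field F] (p : F) (hp0 : p ≠ 0)
    (hp : ∀ n : ℕ, 0 < n → p ^ n ≠ 1) (i j : ℕ) :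
    (∑ k ∈ Finset.range (i + 1), ∑ l ∈ Finset.range (j + 1),
        qbinom p i k * (qpoch (p ^ ((i : ℤ) - (j : ℤ) - (k : ℤ))) p l / qpoch p p l) *
          ((-1 : F) ^ k * p ^ (k * (k - 1) / 2)) * p ^ l) =
      if i = j then 1 else 0 := by
  have step1 : ∀ k ∈ Finset.range (i + 1),
      (∑ l ∈ Finset.range (j + 1),
        qbinom p i k * (qpoch (p ^ ((i : ℤ) - (j : ℤ) - (k : ℤ))) p l / qpoch p p l) *
          ((-1 : F) ^ k * p ^ (k * (k - 1) / 2)) * p ^ l)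
        = qbinom p i k * qbinom p (i - k) j * ((-1 : F) ^ k * p ^ (k * (k - 1) / 2)) := by
    intro k hk
    have hk' : k ≤ i := by
      have := Finset.mem_range.mp hk
      omega
    have e1 : (∑ l ∈ Finset.range (j + 1),
        qbinom p i k * (qpoch (p ^ ((i : ℤ) - (j : ℤ) - (k : ℤ))) p l / qpoch p p l) *
          ((-1 : F) ^ k * p ^ (k * (k - 1) / 2)) * p ^ l)
        = qbinom p i k * ((-1 : F) ^ k * p ^ (k * (k - 1) / 2)) *
          (∑ l ∈ Finset.range (j + 1),
            qpoch (p ^ ((i : ℤ) - (j : ℤ) - (k : ℤ))) p l / qpoch p p l * p ^ l) := by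
      rw [Finset.mul_sum]
      exact Finset.sum_congr rfl fun l _ => by ring
    rw [e1, qpoch_sum p hp]
    have e2 : (p : F) ^ ((i : ℤ) - (j : ℤ) - (k : ℤ)) * p = p ^ (((i - k : ℕ) : ℤ) - (j : ℤ) + 1) := by
      rw [show (((i - k : ℕ) : ℤ) - (j : ℤ) + 1) = ((i : ℤ) - (j : ℤ) - (k : ℤ)) + 1 by omega,
        zpow_add₀ hp0, zpow_one]
    rw [e2, key_G p hp0 j (i - k)]
    have := qpoch_p_ne_zero p hp j
    field_simp
  rw [Finset.sum_congr rfl step1]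
  have step2 : ∀ k ∈ Finset.range (i + 1),
      qbinom p i k * qbinom p (i - k) j * ((-1 : F) ^ k * p ^ (k * (k - 1) / 2))
        = qbinom p i j * (qbinom p (i - j) k * ((-1 : F) ^ k * p ^ (k * (k - 1) / 2))) := by
    intro k hk
    have hk' : k ≤ i := by
      have := Finset.mem_range.mp hk
      omega
    rw [revision p hp0 hp j hk']
    ring
  rw [Finset.sum_congr rfl step2, ← Finset.mul_sum]
  by_cases hij : i = j
  · subst hij
    rw [if_pos rfl, qbinom_self, one_mul, Nat.sub_self]
    rw [Finset.sum_eq_single_of_mem 0 (Finset.mem_range.mpr (Nat.succ_pos i))]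
    · simp [qbinom_zero_right]
    · intro b _ hb
      rw [qbinom_of_lt p (by omega), zero_mul]
  · rw [if_neg hij]
    rcases lt_or_gt_of_ne hij with h | h
    · rw [qbinom_of_lt p h, zero_mul]
    · have hsub : ∑ k ∈ Finset.range (i + 1),
          qbinom p (i - j) k * ((-1 : F) ^ k * p ^ (k * (k - 1) / 2))
            = ∑ k ∈ Finset.range (i - j + 1),
              qbinom p (i - j) k * ((-1 : F) ^ k * p ^ (k * (k - 1) / 2)) := by
        refine (Finset.sum_subset (Finset.range_subset_range.mpr (by omega)) ?_).symm
        intro x _ hx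
        rw [qbinom_of_lt p (by simp at hx ⊢; omega), zero_mul]
      rw [hsub, alt_sum p, qpoch_one_eq_zero p (by omega), mul_zero]
end

section
/- The linear map Δ is coassociative: (Δ ⊗ id_M) ∘ Δ = (id_M ⊗ Δ) ∘ Δ as linear maps M → M ⊗ M ⊗ M. -/
open scoped TensorProduct

set_option maxSynthPendingDepth 2

lemma Theta_union_left {ι : Type*} [LinearOrder ι] {A B C : Finset ι} (h : Disjoint A B) :
    Theta (A ∪ B) C = Theta A C + Theta B C := Finset.sum_union h

lemma Theta_union_right {ι : Type*} [LinearOrder ι] {A B C : Finset ι} (h : Disjoint B C) :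
    Theta A (B ∪ C) = Theta A B + Theta A C := by
  unfold Theta
  rw [← Finset.sum_add_distrib]
  exact Finset.sum_congr rfl fun a _ => Finset.sum_union h

lemma sdiff_helper {ι : Type*} [DecidableEq ι] {E A B : Finset ι} (hA : A ⊆ E) (hB : B ⊆ A) :
    (E \ B) \ (A \ B) = E \ A := by
  ext x
  have := @hB x
  simp only [Finset.mem_sdiff, not_and, not_not]
  tauto

lemma theta_key {ι : Type*} [LinearOrder ι] {E A B : Finset ι} (hA : A ⊆ E) (hB : B ⊆ A) :
    Theta A (E \ A) + Theta B (A \ B) = Theta B (E \ B) + Theta (A \ B) (E \ A) := by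
  have h1 : A = B ∪ (A \ B) := (Finset.union_sdiff_of_subset hB).symm
  have h2 : E \ B = (A \ B) ∪ (E \ A) := by
    rw [Finset.union_comm, Finset.sdiff_union_sdiff_cancel hA hB]
  have d1 : Disjoint B (A \ B) := Finset.disjoint_sdiff
  have d2 : Disjoint (A \ B) (E \ A) :=
    Finset.disjoint_sdiff.mono_left Finset.sdiff_subset
  calc Theta A (E \ A) + Theta B (A \ B)
      = Theta (B ∪ (A \ B)) (E \ A) + Theta B (A \ B) := by rw [← h1]
    _ = Theta B (E \ A) + Theta (A \ B) (E \ A) + Theta B (A \ B) := by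
        rw [Theta_union_left d1]
    _ = Theta B ((A \ B) ∪ (E \ A)) + Theta (A \ B) (E \ A) := by
        rw [Theta_union_right d2]; ring
    _ = Theta B (E \ B) + Theta (A \ B) (E \ A) := by rw [← h2]

/-- Coassociativity of the coproduct `Δ f_E = Σ_{A ⊆ E} (−p)^{θ(A,E∖A)} f_A ⊗ f_{E∖A}`:
`(Δ ⊗ id) ∘ Δ = (id ⊗ Δ) ∘ Δ` (compared via the canonical associator). -/
theorem coproduct_coassoc (F : Type*) [Field F] (p : F) (ι : Type*) [LinearOrder ι]
    (Δ : (Finset ι →₀ F) →ₗ[F] (Finset ι →₀ F) ⊗[F] (Finset ι →₀ F))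
    (hΔ : ∀ E : Finset ι,
      Δ (Finsupp.single E 1) =
        ∑ A ∈ E.powerset, (-p) ^ Theta A (E \ A) •
          (Finsupp.single A (1 : F) ⊗ₜ[F] Finsupp.single (E \ A) (1 : F))) :
    (TensorProduct.assoc F (Finset ι →₀ F) (Finset ι →₀ F) (Finset ι →₀ F)).toLinearMap ∘ₗ
        LinearMap.rTensor (Finset ι →₀ F) Δ ∘ₗ Δ =
      LinearMap.lTensor (Finset ι →₀ F) Δ ∘ₗ Δ := by
  apply Finsupp.lhom_ext
  intro E b
  have hb : (Finsupp.single E b : Finset ι →₀ F) = b • Finsupp.single E 1 := by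
    rw [Finsupp.smul_single, smul_eq_mul, mul_one]
  rw [hb, map_smul, map_smul]
  congr 1
  simp only [LinearMap.comp_apply, hΔ, map_sum, map_smul, LinearMap.rTensor_tmul,
    LinearMap.lTensor_tmul, LinearEquiv.coe_coe, TensorProduct.sum_tmul,
    TensorProduct.tmul_sum, TensorProduct.smul_tmul, TensorProduct.tmul_smul,
    Finset.smul_sum, TensorProduct.assoc_tmul, smul_smul, ← pow_add]
  rw [Finset.sum_sigma' E.powerset, Finset.sum_sigma' E.powerset]
  refine Finset.sum_bij' (fun x _ => ⟨x.2, x.1 \ x.2⟩) (fun y _ => ⟨y.1 ∪ y.2, y.1⟩)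
    ?_ ?_ ?_ ?_ ?_
  · rintro ⟨A, B⟩ hx
    simp only [Finset.mem_sigma, Finset.mem_powerset] at hx ⊢
    exact ⟨hx.2.trans hx.1, Finset.sdiff_subset_sdiff hx.1 le_rfl⟩
  · rintro ⟨C, D⟩ hy
    simp only [Finset.mem_sigma, Finset.mem_powerset] at hy ⊢
    exact ⟨Finset.union_subset hy.1 (hy.2.trans Finset.sdiff_subset), Finset.subset_union_left⟩
  · rintro ⟨A, B⟩ hx
    simp only [Finset.mem_sigma, Finset.mem_powerset] at hx
    simp [Finset.union_sdiff_of_subset hx.2]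
  · rintro ⟨C, D⟩ hy
    simp only [Finset.mem_sigma, Finset.mem_powerset] at hy
    have hd : Disjoint C D := Finset.disjoint_sdiff.mono_right hy.2
    simp [Finset.union_sdiff_cancel_left hd]
  · rintro ⟨A, B⟩ hx
    simp only [Finset.mem_sigma, Finset.mem_powerset] at hx
    rw [sdiff_helper hx.1 hx.2, theta_key hx.1 hx.2]
end

section
/- For every finite subset E of ι, the following hold in Λ(V): Σ_{A ⊆ E} (−p)^{θ(A, E∖A)} · (−1)^{|A|} p^{|A|(|A|−1)/2} · f_A * f_{E∖A} = 1 if E = ∅ and = 0 otherwise; and likewise Σ_{A ⊆ E} (−p)^{θ(A, E∖A)} · (−1)^{|E∖A|} p^{|E∖A|(|E∖A|−1)/2} · f_A * f_{E∖A} = 1 if E = ∅ and = 0 otherwise. (These are the two antipode axioms ∇(S⊗id)Δ = ηε = ∇(id⊗S)Δ for the braided Hopf algebra Λ_p(V) with the antipode S f_E = (−1)^{|E|} p^{|E|(|E|−1)/2} f_E, written out in the set-theoretic basis.) -/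
/-- The set-theoretic basis element `f_E` of the exterior algebra: the product of the
generators `ι(e b)`, `b ∈ E`, taken in increasing order. -/
noncomputable def fSet (F : Type*) [Field F] {ι : Type*} [LinearOrder ι] (E : Finset ι) :
    ExteriorAlgebra F (ι →₀ F) :=
  ((E.sort (· ≤ ·)).map fun b => ExteriorAlgebra.ι F (Finsupp.single b 1)).prod

section Aux

variable {F : Type*} [Field F] {ι : Type*} [LinearOrder ι]

lemma theta_eq (A C : Finset ι) : Theta A C = ∑ a ∈ A, (C.filter (· < a)).card :=
  Finset.sum_congr rfl fun a _ => (Finset.card_filter _ _).symm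

lemma theta_eq' (A C : Finset ι) : Theta A C = ∑ b ∈ C, (A.filter (b < ·)).card := by
  rw [Theta, Finset.sum_comm]
  exact Finset.sum_congr rfl fun b _ => (Finset.card_filter _ _).symm

lemma theta_union_right (A B C : Finset ι) (h : Disjoint B C) :
    Theta A (B ∪ C) = Theta A B + Theta A C := by
  unfold Theta
  rw [← Finset.sum_add_distrib]
  exact Finset.sum_congr rfl fun a _ => Finset.sum_union h

lemma theta_union_left (A B C : Finset ι) (h : Disjoint A B) :
    Theta (A ∪ B) C = Theta A C + Theta B C :=
  Finset.sum_union h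

lemma two_theta_self (A : Finset ι) : 2 * Theta A A = A.card * (A.card - 1) := by
  have key : Theta A A + Theta A A
      = ∑ a ∈ A, ∑ b ∈ A, ((if b < a then 1 else 0) + (if a < b then 1 else 0)) := by
    simp only [Finset.sum_add_distrib]
    congr 1
    rw [Theta, Finset.sum_comm]
  have inner : ∀ a ∈ A, (∑ b ∈ A, ((if b < a then 1 else 0) + (if a < b then 1 else 0)))
      = A.card - 1 := by
    intro a ha
    have : ∀ b ∈ A, ((if b < a then 1 else 0) + (if a < b then 1 else 0))
        = if b ≠ a then 1 else 0 := by
      intro b _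
      rcases lt_trichotomy a b with h | h | h
      · simp [h, not_lt_of_gt h, ne_of_gt h]
      · simp [h]
      · simp [h, not_lt_of_gt h, ne_of_lt h]
    rw [Finset.sum_congr rfl this, ← Finset.card_filter, Finset.filter_ne' A a,
      Finset.card_erase_of_mem ha]
  rw [two_mul, key, Finset.sum_congr rfl inner, Finset.sum_const, smul_eq_mul]

lemma theta_self_s13 (A : Finset ι) : Theta A A = A.card * (A.card - 1) / 2 := by
  have := two_theta_self A
  omega

lemma fSet_empty : fSet F (∅ : Finset ι) = 1 := by simp [fSet]

lemma fSet_insert_of_min {a : ι} {C : Finset ι} (h : ∀ b ∈ C, a ≤ b) (ha : a ∉ C) :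
    fSet F (insert a C) = ExteriorAlgebra.ι F (Finsupp.single a 1) * fSet F C := by
  unfold fSet
  rw [Finset.sort_insert (· ≤ ·) h ha, List.map_cons, List.prod_cons]

lemma ι_swap (x y : ι →₀ F) :
    ExteriorAlgebra.ι F x * ExteriorAlgebra.ι F y
      = -(ExteriorAlgebra.ι F y * ExteriorAlgebra.ι F x) :=
  eq_neg_of_add_eq_zero_left (ExteriorAlgebra.ι_add_mul_swap x y)

lemma ι_mul_fSet (a : ι) : ∀ C : Finset ι, a ∉ C →
    ExteriorAlgebra.ι F (Finsupp.single a 1) * fSet F C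
      = ((-1 : F) ^ (C.filter (· < a)).card) • fSet F (insert a C) := by
  intro C
  induction C using Finset.strongInduction with
  | _ C ih =>
    intro ha
    rcases C.eq_empty_or_nonempty with rfl | hC
    · have h1 : fSet F ({a} : Finset ι) = ExteriorAlgebra.ι F (Finsupp.single a 1) := by
        simp [fSet, Finset.sort_singleton]
      simp [fSet_empty, h1]
    · set m := C.min' hC with hm
      have hmC : m ∈ C := C.min'_mem hC
      set C' := C.erase m with hC'def
      have hCm : C = insert m C' := (Finset.insert_erase hmC).symm
      have hmnot : m ∉ C' := Finset.notMem_erase _ _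
      have hmin : ∀ b ∈ C', m ≤ b := fun b hb => C.min'_le b (Finset.mem_of_mem_erase hb)
      have hfC : fSet F C = ExteriorAlgebra.ι F (Finsupp.single m 1) * fSet F C' := by
        rw [hCm]; exact fSet_insert_of_min hmin hmnot
      have hane : a ≠ m := fun h => ha (h ▸ hmC)
      rcases hane.lt_or_gt with hlt | hlt
      · -- a < m, so a is below everything in C
        have hle : ∀ b ∈ C, a ≤ b := fun b hb => le_of_lt (lt_of_lt_of_le hlt (C.min'_le b hb))
        have hfilter : C.filter (· < a) = ∅ := by
          apply Finset.filter_eq_empty_iff.mpr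
          intro b hb
          exact not_lt_of_ge (hle b hb)
        rw [hfilter, Finset.card_empty, pow_zero, one_smul,
          fSet_insert_of_min hle ha]
      · -- m < a
        have haC' : a ∉ C' := fun h => ha (Finset.mem_of_mem_erase h)
        have hss : C' ⊂ C := Finset.erase_ssubset hmC
        have ihc := ih C' hss haC'
        have hmins : ∀ b ∈ insert a C', m ≤ b := by
          intro b hb
          rcases Finset.mem_insert.mp hb with rfl | hb
          · exact le_of_lt hlt
          · exact hmin b hb
        have hmnot' : m ∉ insert a C' := by
          simp only [Finset.mem_insert]
          rintro (rfl | h)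
          · exact hane rfl
          · exact hmnot h
        have hfins : fSet F (insert a C)
            = ExteriorAlgebra.ι F (Finsupp.single m 1) * fSet F (insert a C') := by
          have : insert a C = insert m (insert a C') := by
            rw [hCm, Finset.insert_comm]
          rw [this]; exact fSet_insert_of_min hmins hmnot'
        have hcard : (C.filter (· < a)).card = (C'.filter (· < a)).card + 1 := by
          rw [hCm, Finset.filter_insert, if_pos hlt,
            Finset.card_insert_of_notMem (fun h => hmnot (Finset.mem_of_mem_filter _ h))]
        calc ExteriorAlgebra.ι F (Finsupp.single a 1) * fSet F C
            = ExteriorAlgebra.ι F (Finsupp.single a 1)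
              * (ExteriorAlgebra.ι F (Finsupp.single m 1) * fSet F C') := by rw [hfC]
          _ = -(ExteriorAlgebra.ι F (Finsupp.single m 1)
              * (ExteriorAlgebra.ι F (Finsupp.single a 1) * fSet F C')) := by
              rw [← mul_assoc, ← mul_assoc, ι_swap, neg_mul]
          _ = -(ExteriorAlgebra.ι F (Finsupp.single m 1)
              * (((-1 : F) ^ (C'.filter (· < a)).card) • fSet F (insert a C'))) := by rw [ihc]
          _ = ((-1 : F) ^ ((C'.filter (· < a)).card + 1)) • fSet F (insert a C) := by
              rw [hfins, mul_smul_comm, ← neg_smul, pow_succ]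
              ring_nf
          _ = ((-1 : F) ^ (C.filter (· < a)).card) • fSet F (insert a C) := by rw [hcard]

lemma fSet_mul_fSet : ∀ A C : Finset ι, Disjoint A C →
    fSet F A * fSet F C = ((-1 : F) ^ Theta A C) • fSet F (A ∪ C) := by
  intro A
  induction A using Finset.strongInduction with
  | _ A ih =>
    intro C hdisj
    rcases A.eq_empty_or_nonempty with rfl | hA
    · simp [fSet_empty, Theta]
    · set m := A.min' hA with hm
      have hmA : m ∈ A := A.min'_mem hA
      set A' := A.erase m with hA'def
      have hAm : A = insert m A' := (Finset.insert_erase hmA).symm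
      have hmnot : m ∉ A' := Finset.notMem_erase _ _
      have hmin : ∀ b ∈ A', m ≤ b := fun b hb => A.min'_le b (Finset.mem_of_mem_erase hb)
      have hdisj' : Disjoint A' C := Finset.disjoint_of_subset_left (Finset.erase_subset _ _) hdisj
      have hmC : m ∉ C := Finset.disjoint_left.mp hdisj hmA
      have hss : A' ⊂ A := Finset.erase_ssubset hmA
      have ihc := ih A' hss C hdisj'
      have hfA : fSet F A = ExteriorAlgebra.ι F (Finsupp.single m 1) * fSet F A' := by
        rw [hAm]; exact fSet_insert_of_min hmin hmnot
      have hmU : m ∉ A' ∪ C := by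
        simp only [Finset.mem_union]
        rintro (h | h)
        · exact hmnot h
        · exact hmC h
      have hfilter : ((A' ∪ C).filter (· < m)).card = (C.filter (· < m)).card := by
        rw [Finset.filter_union]
        have : A'.filter (· < m) = ∅ := by
          apply Finset.filter_eq_empty_iff.mpr
          intro b hb
          exact not_lt_of_ge (hmin b hb)
        rw [this, Finset.empty_union]
      have htheta : Theta A C = (C.filter (· < m)).card + Theta A' C := by
        rw [theta_eq, hAm, Finset.sum_insert hmnot, theta_eq]
      calc fSet F A * fSet F C
          = ExteriorAlgebra.ι F (Finsupp.single m 1) * (fSet F A' * fSet F C) := by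
            rw [hfA, mul_assoc]
        _ = ExteriorAlgebra.ι F (Finsupp.single m 1)
            * (((-1 : F) ^ Theta A' C) • fSet F (A' ∪ C)) := by rw [ihc]
        _ = ((-1 : F) ^ Theta A' C) •
            (ExteriorAlgebra.ι F (Finsupp.single m 1) * fSet F (A' ∪ C)) := by
            rw [mul_smul_comm]
        _ = ((-1 : F) ^ Theta A' C) • (((-1 : F) ^ ((A' ∪ C).filter (· < m)).card)
            • fSet F (insert m (A' ∪ C))) := by rw [ι_mul_fSet m _ hmU]
        _ = ((-1 : F) ^ Theta A C) • fSet F (A ∪ C) := by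
            rw [smul_smul, ← pow_add, hfilter, htheta, Nat.add_comm]
            congr 2
            rw [hAm, Finset.insert_union]

lemma scalar_one (p : F) {E : Finset ι} (hE : E.Nonempty) :
    ∑ A ∈ E.powerset, (-1 : F) ^ A.card * p ^ (Theta A E) = 0 := by
  have key : ∀ A ∈ E.powerset,
      (-1 : F) ^ A.card * p ^ (Theta A E)
        = (∏ a ∈ A, -(p ^ (E.filter (· < a)).card)) * ∏ a ∈ E \ A, (1 : F) := by
    intro A _
    rw [Finset.prod_const_one, mul_one]
    have : ∀ a ∈ A, -(p ^ (E.filter (· < a)).card)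
        = (-1 : F) * p ^ (E.filter (· < a)).card := fun a _ => by ring
    rw [Finset.prod_congr rfl this, Finset.prod_mul_distrib, Finset.prod_const,
      Finset.prod_pow_eq_pow_sum, ← theta_eq]
  rw [Finset.sum_congr rfl key, ← Finset.prod_add]
  apply Finset.prod_eq_zero (E.min'_mem hE)
  have : E.filter (· < E.min' hE) = ∅ := by
    apply Finset.filter_eq_empty_iff.mpr
    intro b hb
    exact not_lt_of_ge (E.min'_le b hb)
  rw [this, Finset.card_empty, pow_zero]
  ring

lemma scalar_two (p : F) {E : Finset ι} (hE : E.Nonempty) :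
    ∑ A ∈ E.powerset, (-1 : F) ^ (E \ A).card * p ^ (Theta E (E \ A)) = 0 := by
  have key : ∀ A ∈ E.powerset,
      (-1 : F) ^ (E \ A).card * p ^ (Theta E (E \ A))
        = (∏ a ∈ A, (1 : F)) * ∏ b ∈ E \ A, -(p ^ (E.filter (b < ·)).card) := by
    intro A _
    rw [Finset.prod_const_one, one_mul]
    have : ∀ b ∈ E \ A, -(p ^ (E.filter (b < ·)).card)
        = (-1 : F) * p ^ (E.filter (b < ·)).card := fun b _ => by ring
    rw [Finset.prod_congr rfl this, Finset.prod_mul_distrib, Finset.prod_const,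
      Finset.prod_pow_eq_pow_sum, ← theta_eq']
  rw [Finset.sum_congr rfl key, ← Finset.prod_add]
  apply Finset.prod_eq_zero (E.max'_mem hE)
  have : E.filter (E.max' hE < ·) = ∅ := by
    apply Finset.filter_eq_empty_iff.mpr
    intro b hb
    exact not_lt_of_ge (E.le_max' b hb)
  rw [this, Finset.card_empty, pow_zero]
  ring

end Aux

/-- The two antipode axioms `∇(S⊗id)Δ = ηε = ∇(id⊗S)Δ` for `Λ_p(V)` with antipode
`S f_E = (−1)^{|E|} p^{|E|(|E|−1)/2} f_E`, written out in the set-theoretic basis. -/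
theorem antipode_axioms (F : Type*) [Field F] (p : F) (ι : Type*) [LinearOrder ι]
    (E : Finset ι) :
    (∑ A ∈ E.powerset,
        ((-p) ^ Theta A (E \ A) * (-1 : F) ^ A.card * p ^ (A.card * (A.card - 1) / 2)) •
          (fSet F A * fSet F (E \ A)))
      = (if E = ∅ then 1 else 0) ∧
    (∑ A ∈ E.powerset,
        ((-p) ^ Theta A (E \ A) * (-1 : F) ^ (E \ A).card *
            p ^ ((E \ A).card * ((E \ A).card - 1) / 2)) •
          (fSet F A * fSet F (E \ A)))
      = (if E = ∅ then 1 else 0) := by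
  rcases E.eq_empty_or_nonempty with rfl | hE
  · simp [Theta, fSet_empty]
  · have hne : E ≠ ∅ := hE.ne_empty
    have hmul : ∀ A ∈ E.powerset,
        fSet F A * fSet F (E \ A) = ((-1 : F) ^ Theta A (E \ A)) • fSet F E := by
      intro A hA
      have hsub : A ⊆ E := Finset.mem_powerset.mp hA
      rw [fSet_mul_fSet A (E \ A) (Finset.disjoint_sdiff), Finset.union_sdiff_of_subset hsub]
    have hsq : ∀ n : ℕ, (-1 : F) ^ n * (-1 : F) ^ n = 1 := by
      intro n
      rw [← pow_add]
      exact Even.neg_one_pow ⟨n, rfl⟩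
    constructor
    · have step : ∀ A ∈ E.powerset,
          ((-p) ^ Theta A (E \ A) * (-1 : F) ^ A.card * p ^ (A.card * (A.card - 1) / 2)) •
            (fSet F A * fSet F (E \ A))
          = ((-1 : F) ^ A.card * p ^ (Theta A E)) • fSet F E := by
        intro A hA
        have hsub : A ⊆ E := Finset.mem_powerset.mp hA
        rw [hmul A hA, smul_smul]
        congr 1
        have hth : Theta A (E \ A) + Theta A A = Theta A E := by
          rw [← theta_union_right A (E \ A) A Finset.sdiff_disjoint,
            Finset.sdiff_union_of_subset hsub]
        rw [neg_pow, ← theta_self_s13]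
        calc (-1 : F) ^ Theta A (E \ A) * p ^ Theta A (E \ A) * (-1 : F) ^ A.card
              * p ^ Theta A A * (-1 : F) ^ Theta A (E \ A)
            = ((-1 : F) ^ Theta A (E \ A) * (-1 : F) ^ Theta A (E \ A)) * (-1 : F) ^ A.card
              * (p ^ Theta A (E \ A) * p ^ Theta A A) := by ring
          _ = (-1 : F) ^ A.card * p ^ Theta A E := by
              rw [hsq, ← pow_add, hth, one_mul]
      rw [Finset.sum_congr rfl step, ← Finset.sum_smul, scalar_one p hE, zero_smul,
        if_neg hne]
    · have step : ∀ A ∈ E.powerset,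
          ((-p) ^ Theta A (E \ A) * (-1 : F) ^ (E \ A).card *
              p ^ ((E \ A).card * ((E \ A).card - 1) / 2)) •
            (fSet F A * fSet F (E \ A))
          = ((-1 : F) ^ (E \ A).card * p ^ (Theta E (E \ A))) • fSet F E := by
        intro A hA
        have hsub : A ⊆ E := Finset.mem_powerset.mp hA
        rw [hmul A hA, smul_smul]
        congr 1
        have hth : Theta A (E \ A) + Theta (E \ A) (E \ A) = Theta E (E \ A) := by
          rw [← theta_union_left A (E \ A) (E \ A) Finset.disjoint_sdiff,
            Finset.union_sdiff_of_subset hsub]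
        rw [neg_pow, ← theta_self_s13]
        calc (-1 : F) ^ Theta A (E \ A) * p ^ Theta A (E \ A) * (-1 : F) ^ (E \ A).card
              * p ^ Theta (E \ A) (E \ A) * (-1 : F) ^ Theta A (E \ A)
            = ((-1 : F) ^ Theta A (E \ A) * (-1 : F) ^ Theta A (E \ A)) * (-1 : F) ^ (E \ A).card
              * (p ^ Theta A (E \ A) * p ^ Theta (E \ A) (E \ A)) := by ring
          _ = (-1 : F) ^ (E \ A).card * p ^ Theta E (E \ A) := by
              rw [hsq, ← pow_add, hth, one_mul]
      rw [Finset.sum_congr rfl step, ← Finset.sum_smul, scalar_two p hE, zero_smul,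
        if_neg hne]
end

section
/- The operators T1, T2, L, R on W satisfy (1 − p)·(R ∘ L − L ∘ R) = T1 − T2. -/
set_option maxSynthPendingDepth 2

namespace RLAux

open Finset

variable {ι : Type*} [LinearOrder ι]

/-- number of elements of `s` strictly below `x` -/
def lc (s : Finset ι) (x : ι) : ℕ := ∑ y ∈ s, if y < x then 1 else 0

/-- number of elements of `s` strictly above `x` -/
def gc (s : Finset ι) (x : ι) : ℕ := ∑ y ∈ s, if x < y then 1 else 0

lemma theta_left (x : ι) (B : Finset ι) : Theta {x} B = lc B x :=
  Finset.sum_singleton _ _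

lemma theta_right (A : Finset ι) (x : ι) : Theta A {x} = gc A x :=
  Finset.sum_congr rfl fun _ _ => Finset.sum_singleton _ _

lemma sdiff_singleton (s : Finset ι) (a : ι) : s \ {a} = s.erase a :=
  Finset.sdiff_singleton_eq_erase a s

lemma union_singleton (s : Finset ι) (a : ι) : s ∪ {a} = insert a s := by
  rw [insert_eq, union_comm]

lemma lc_erase_self (s : Finset ι) (x : ι) : lc (s.erase x) x = lc s x :=
  Finset.sum_erase s (by simp)

lemma gc_erase_self (s : Finset ι) (x : ι) : gc (s.erase x) x = gc s x :=
  Finset.sum_erase s (by simp)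

lemma lc_insert (s : Finset ι) (a x : ι) (h : a ∉ s) :
    lc (insert a s) x = (if a < x then 1 else 0) + lc s x := by
  rw [lc, Finset.sum_insert h]; rfl

lemma gc_insert (s : Finset ι) (a x : ι) (h : a ∉ s) :
    gc (insert a s) x = (if x < a then 1 else 0) + gc s x := by
  rw [gc, Finset.sum_insert h]; rfl

lemma lc_erase (s : Finset ι) (a x : ι) (h : a ∈ s) :
    lc s x = (if a < x then 1 else 0) + lc (s.erase a) x :=
  (Finset.add_sum_erase s _ h).symm

lemma gc_erase (s : Finset ι) (a x : ι) (h : a ∈ s) :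
    gc s x = (if x < a then 1 else 0) + gc (s.erase a) x :=
  (Finset.add_sum_erase s _ h).symm

/-- the exponent `g E Fs x` -/
def g (E Fs : Finset ι) (x : ι) : ℕ := lc (Fs.erase x) x + gc (E.erase x) x

lemma g_erase_E (E Fs : Finset ι) {x y : ι} (hx : x ∈ E) (hxy : y < x) :
    g E Fs y = g (E.erase x) Fs y + 1 := by
  have hxy' : x ≠ y := ne_of_gt hxy
  have hx' : x ∈ E.erase y := Finset.mem_erase.2 ⟨hxy', hx⟩
  have h1 : gc (E.erase y) y = (if y < x then 1 else 0) + gc ((E.erase y).erase x) y :=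
    gc_erase _ _ _ hx'
  rw [if_pos hxy] at h1
  unfold g
  rw [Finset.erase_right_comm (a := x) (b := y)]
  omega

lemma g_erase_F (E Fs : Finset ι) {x y : ι} (hxy : y < x) :
    g E Fs y = g E (Fs.erase x) y := by
  unfold g
  rw [Finset.erase_right_comm (a := x) (b := y)]
  have : lc ((Fs.erase y).erase x) y = lc (Fs.erase y) y :=
    Finset.sum_erase _ (if_neg (asymm hxy))
  omega

lemma lc_all (s : Finset ι) (x : ι) (h : ∀ y ∈ s, y < x) : lc s x = s.card := by
  rw [lc, Finset.card_eq_sum_ones]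
  exact Finset.sum_congr rfl fun y hy => if_pos (h y hy)

lemma gc_none (s : Finset ι) (x : ι) (h : ∀ y ∈ s, y ≤ x) : gc s x = 0 := by
  rw [gc]
  exact Finset.sum_eq_zero fun y hy => if_neg (not_lt_of_ge (h y hy))


lemma key {F : Type*} [Field F] (p : F) :
    ∀ n (E Fs : Finset ι), (E ∪ Fs).card ≤ n →
    (1 - p) * ((∑ b ∈ Fs \ E, p ^ g E Fs b) - ∑ a ∈ E \ Fs, p ^ g E Fs a)
      = p ^ E.card - p ^ Fs.card := by
  intro n
  induction n with
  | zero =>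
    intro E Fs h
    obtain ⟨hE, hF⟩ := Finset.union_eq_empty.1 (Finset.card_eq_zero.1 (Nat.le_zero.1 h))
    subst hE; subst hF; simp
  | succ n ih =>
    intro E Fs h
    rcases Finset.eq_empty_or_nonempty (E ∪ Fs) with he | hne
    · obtain ⟨hE, hF⟩ := Finset.union_eq_empty.1 he
      subst hE; subst hF; simp
    · set x := (E ∪ Fs).max' hne with hxdef
      have hx : x ∈ E ∪ Fs := Finset.max'_mem _ hne
      have hmax : ∀ y ∈ E ∪ Fs, y ≤ x := fun y hy => Finset.le_max' _ y hy
      have hcard : ((E ∪ Fs).erase x).card ≤ n := by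
        rw [Finset.card_erase_of_mem hx]; omega
      by_cases hxE : x ∈ E <;> by_cases hxF : x ∈ Fs
      · -- Case A : x ∈ E ∩ Fs
        set E' := E.erase x with hE'
        set F' := Fs.erase x with hF'
        have hsets1 : Fs \ E = F' \ E' := by
          ext y; by_cases hy : y = x <;>
            simp [Finset.mem_sdiff, Finset.mem_erase, hy, hxE, hxF, hE', hF'] <;> tauto
        have hsets2 : E \ Fs = E' \ F' := by
          ext y; by_cases hy : y = x <;>
            simp [Finset.mem_sdiff, Finset.mem_erase, hy, hxE, hxF, hE', hF'] <;> tauto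
        have htrans : ∀ y, y ∈ E ∪ Fs → y ≠ x → g E Fs y = g E' F' y + 1 := by
          intro y hy hyx
          have hlt : y < x := lt_of_le_of_ne (hmax y hy) hyx
          rw [g_erase_E E Fs hxE hlt, g_erase_F E' Fs hlt]
        have hsum1 : ∑ b ∈ Fs \ E, p ^ g E Fs b = p * ∑ b ∈ F' \ E', p ^ g E' F' b := by
          rw [hsets1, Finset.mul_sum]
          refine Finset.sum_congr rfl fun b hb => ?_
          obtain ⟨hb1, _⟩ := Finset.mem_sdiff.1 hb
          rw [htrans b (Finset.mem_union_right _ (Finset.mem_of_mem_erase hb1))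
              (Finset.mem_erase.1 hb1).1, pow_succ]
          ring
        have hsum2 : ∑ a ∈ E \ Fs, p ^ g E Fs a = p * ∑ a ∈ E' \ F', p ^ g E' F' a := by
          rw [hsets2, Finset.mul_sum]
          refine Finset.sum_congr rfl fun a ha => ?_
          obtain ⟨ha1, _⟩ := Finset.mem_sdiff.1 ha
          rw [htrans a (Finset.mem_union_left _ (Finset.mem_of_mem_erase ha1))
              (Finset.mem_erase.1 ha1).1, pow_succ]
          ring
        have hIH := ih E' F' (by
          rw [hE', hF', ← Finset.erase_union_distrib]; exact hcard)
        rw [hsum1, hsum2, ← Finset.card_erase_add_one hxE, ← Finset.card_erase_add_one hxF,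
          pow_succ, pow_succ]
        linear_combination p * hIH
      · -- Case B : x ∈ E, x ∉ Fs
        set E' := E.erase x with hE'
        have hsets1 : Fs \ E = Fs \ E' := by
          ext y; by_cases hy : y = x <;>
            simp [Finset.mem_sdiff, Finset.mem_erase, hy, hxE, hxF, hE'] <;> tauto
        have hxnot : x ∉ E' \ Fs := by simp [hE']
        have hsets2 : E \ Fs = insert x (E' \ Fs) := by
          ext y; by_cases hy : y = x <;>
            simp [Finset.mem_sdiff, Finset.mem_erase, hy, hxE, hxF, hE'] <;> tauto
        have hgx : g E Fs x = Fs.card := by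
          rw [g, Finset.erase_eq_of_notMem hxF, lc_all, gc_none, add_zero]
          · intro y hy
            exact hmax y (Finset.mem_union_left _ (Finset.mem_of_mem_erase hy))
          · intro y hy
            refine lt_of_le_of_ne (hmax y (Finset.mem_union_right _ hy)) ?_
            rintro rfl; exact hxF hy
        have htrans : ∀ y, y ∈ E ∪ Fs → y ≠ x → g E Fs y = g E' Fs y + 1 := by
          intro y hy hyx
          exact g_erase_E E Fs hxE (lt_of_le_of_ne (hmax y hy) hyx)
        have hsum1 : ∑ b ∈ Fs \ E, p ^ g E Fs b = p * ∑ b ∈ Fs \ E', p ^ g E' Fs b := by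
          rw [hsets1, Finset.mul_sum]
          refine Finset.sum_congr rfl fun b hb => ?_
          obtain ⟨hb1, _⟩ := Finset.mem_sdiff.1 hb
          rw [htrans b (Finset.mem_union_right _ hb1) (by rintro rfl; exact hxF hb1), pow_succ]
          ring
        have hsum2 : ∑ a ∈ E \ Fs, p ^ g E Fs a
            = p ^ Fs.card + p * ∑ a ∈ E' \ Fs, p ^ g E' Fs a := by
          rw [hsets2, Finset.sum_insert hxnot, hgx, Finset.mul_sum]
          congr 1
          refine Finset.sum_congr rfl fun a ha => ?_
          obtain ⟨ha1, _⟩ := Finset.mem_sdiff.1 ha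
          rw [htrans a (Finset.mem_union_left _ (Finset.mem_of_mem_erase ha1))
              (Finset.mem_erase.1 ha1).1, pow_succ]
          ring
        have hIH := ih E' Fs (by
          rw [hE']
          have h2 : E.erase x ∪ Fs = (E ∪ Fs).erase x := by
            rw [Finset.erase_union_distrib, Finset.erase_eq_of_notMem hxF]
          rw [h2]; exact hcard)
        rw [hsum1, hsum2, ← Finset.card_erase_add_one hxE, pow_succ]
        linear_combination p * hIH
      · -- Case C : x ∉ E, x ∈ Fs
        set F' := Fs.erase x with hF'
        have hsets2 : E \ Fs = E \ F' := by
          ext y; by_cases hy : y = x <;>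
            simp [Finset.mem_sdiff, Finset.mem_erase, hy, hxE, hxF, hF'] <;> tauto
        have hxnot : x ∉ F' \ E := by simp [hF']
        have hsets1 : Fs \ E = insert x (F' \ E) := by
          ext y; by_cases hy : y = x <;>
            simp [Finset.mem_sdiff, Finset.mem_erase, hy, hxE, hxF, hF'] <;> tauto
        have hgx : g E Fs x = F'.card := by
          rw [g, lc_all, gc_none, add_zero]
          · intro y hy
            exact hmax y (Finset.mem_union_left _ (Finset.mem_of_mem_erase hy))
          · intro y hy
            exact lt_of_le_of_ne (hmax y (Finset.mem_union_right _ (Finset.mem_of_mem_erase hy)))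
              (Finset.mem_erase.1 hy).1
        have htrans : ∀ y, y ∈ E ∪ Fs → y ≠ x → g E Fs y = g E F' y := by
          intro y hy hyx
          exact g_erase_F E Fs (lt_of_le_of_ne (hmax y hy) hyx)
        have hsum1 : ∑ b ∈ Fs \ E, p ^ g E Fs b
            = p ^ F'.card + ∑ b ∈ F' \ E, p ^ g E F' b := by
          rw [hsets1, Finset.sum_insert hxnot, hgx]
          congr 1
          refine Finset.sum_congr rfl fun b hb => ?_
          obtain ⟨hb1, _⟩ := Finset.mem_sdiff.1 hb
          rw [htrans b (Finset.mem_union_right _ (Finset.mem_of_mem_erase hb1))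
              (Finset.mem_erase.1 hb1).1]
        have hsum2 : ∑ a ∈ E \ Fs, p ^ g E Fs a = ∑ a ∈ E \ F', p ^ g E F' a := by
          rw [hsets2]
          refine Finset.sum_congr rfl fun a ha => ?_
          obtain ⟨ha1, _⟩ := Finset.mem_sdiff.1 ha
          rw [htrans a (Finset.mem_union_left _ ha1) (by rintro rfl; exact hxE ha1)]
        have hIH := ih E F' (by
          rw [hF']
          have h2 : E ∪ Fs.erase x = (E ∪ Fs).erase x := by
            rw [Finset.erase_union_distrib, Finset.erase_eq_of_notMem hxE]
          rw [h2]; exact hcard)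
        rw [hsum1, hsum2, ← Finset.card_erase_add_one hxF, pow_succ]
        linear_combination hIH
      · exact absurd hx (by simp [hxE, hxF])

section Coeffs
variable {F : Type*} [Field F]

lemma hpow (p : F) (n : ℕ) : (-p) ^ n * (-1 : F) ^ n = p ^ n := by
  rw [← mul_pow]; norm_num

lemma diagRL (p : F) (E Fs : Finset ι) {b : ι} (hbF : b ∈ Fs) (hbE : b ∉ E) :
    ((-p) ^ Theta {b} (Fs \ {b}) * (-1 : F) ^ Theta E {b}) *
      ((-p) ^ Theta ((E ∪ {b}) \ {b}) {b} * (-1 : F) ^ Theta {b} (Fs \ {b}))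
      = p ^ g E Fs b := by
  have hEb : (E ∪ {b}) \ {b} = E := by
    rw [union_singleton, sdiff_singleton, Finset.erase_insert hbE]
  rw [hEb, theta_left, theta_right, sdiff_singleton]
  have h1 : gc E b = gc (E.erase b) b := (gc_erase_self E b).symm
  rw [h1]
  calc ((-p) ^ lc (Fs.erase b) b * (-1 : F) ^ gc (E.erase b) b) *
        ((-p) ^ gc (E.erase b) b * (-1 : F) ^ lc (Fs.erase b) b)
      = ((-p) ^ lc (Fs.erase b) b * (-1 : F) ^ lc (Fs.erase b) b) *
        ((-p) ^ gc (E.erase b) b * (-1 : F) ^ gc (E.erase b) b) := by ring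
    _ = p ^ lc (Fs.erase b) b * p ^ gc (E.erase b) b := by rw [hpow, hpow]
    _ = p ^ g E Fs b := by rw [g, pow_add]

lemma diagLR (p : F) (E Fs : Finset ι) {a : ι} (haE : a ∈ E) (haF : a ∉ Fs) :
    ((-p) ^ Theta (E \ {a}) {a} * (-1 : F) ^ Theta {a} Fs) *
      ((-p) ^ Theta {a} ((Fs ∪ {a}) \ {a}) * (-1 : F) ^ Theta (E \ {a}) {a})
      = p ^ g E Fs a := by
  have hFa : (Fs ∪ {a}) \ {a} = Fs := by
    rw [union_singleton, sdiff_singleton, Finset.erase_insert haF]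
  rw [hFa, theta_left, theta_right, sdiff_singleton]
  have h1 : lc Fs a = lc (Fs.erase a) a := (lc_erase_self Fs a).symm
  rw [h1]
  calc ((-p) ^ gc (E.erase a) a * (-1 : F) ^ lc (Fs.erase a) a) *
        ((-p) ^ lc (Fs.erase a) a * (-1 : F) ^ gc (E.erase a) a)
      = ((-p) ^ lc (Fs.erase a) a * (-1 : F) ^ lc (Fs.erase a) a) *
        ((-p) ^ gc (E.erase a) a * (-1 : F) ^ gc (E.erase a) a) := by ring
    _ = p ^ lc (Fs.erase a) a * p ^ gc (E.erase a) a := by rw [hpow, hpow]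
    _ = p ^ g E Fs a := by rw [g, pow_add]

lemma offdiag (p : F) (E Fs : Finset ι) {a b : ι}
    (haE : a ∈ E) (haF : a ∉ Fs) (hbF : b ∈ Fs) (hbE : b ∉ E) :
    ((-p) ^ Theta {b} (Fs \ {b}) * (-1 : F) ^ Theta E {b}) *
      ((-p) ^ Theta ((E ∪ {b}) \ {a}) {a} * (-1 : F) ^ Theta {a} (Fs \ {b}))
    = ((-p) ^ Theta (E \ {a}) {a} * (-1 : F) ^ Theta {a} Fs) *
      ((-p) ^ Theta {b} ((Fs ∪ {a}) \ {b}) * (-1 : F) ^ Theta (E \ {a}) {b}) := by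
  have hab : a ≠ b := fun h => haF (h ▸ hbF)
  have e1 : Theta {b} (Fs \ {b}) + Theta ((E ∪ {b}) \ {a}) {a}
      = Theta (E \ {a}) {a} + Theta {b} ((Fs ∪ {a}) \ {b}) := by
    simp only [sdiff_singleton, union_singleton, theta_left, theta_right]
    rw [Finset.erase_insert_of_ne hab.symm, Finset.erase_insert_of_ne hab,
      gc_insert _ _ _ (fun h => hbE (Finset.mem_of_mem_erase h)),
      lc_insert _ _ _ (fun h => haF (Finset.mem_of_mem_erase h))]
    omega
  have e2 : Theta E {b} + Theta {a} (Fs \ {b})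
      = Theta {a} Fs + Theta (E \ {a}) {b} := by
    simp only [sdiff_singleton, theta_left, theta_right]
    rw [gc_erase E a b haE, lc_erase Fs b a hbF]
    omega
  calc ((-p) ^ Theta {b} (Fs \ {b}) * (-1 : F) ^ Theta E {b}) *
        ((-p) ^ Theta ((E ∪ {b}) \ {a}) {a} * (-1 : F) ^ Theta {a} (Fs \ {b}))
      = (-p) ^ (Theta {b} (Fs \ {b}) + Theta ((E ∪ {b}) \ {a}) {a}) *
        (-1 : F) ^ (Theta E {b} + Theta {a} (Fs \ {b})) := by rw [pow_add, pow_add]; ring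
    _ = (-p) ^ (Theta (E \ {a}) {a} + Theta {b} ((Fs ∪ {a}) \ {b})) *
        (-1 : F) ^ (Theta {a} Fs + Theta (E \ {a}) {b}) := by rw [e1, e2]
    _ = _ := by rw [pow_add, pow_add]; ring

end Coeffs

end RLAux

/-- The `sl₂`-type commutation relation `(1 − p)·(R∘L − L∘R) = T1 − T2` for the operators
`T1, T2, L, R` on `W = Λ_p(V) ⊗ Λ_p(V)`, written in the set-theoretic basis. -/
theorem RL_commutator (F : Type*) [Field F] (p : F) (ι : Type*) [LinearOrder ι]
    (T₁ T₂ L R : ((Finset ι × Finset ι) →₀ F) →ₗ[F] ((Finset ι × Finset ι) →₀ F))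
    (hT₁ : ∀ E Fs : Finset ι,
      T₁ (Finsupp.single (E, Fs) 1) = p ^ E.card • Finsupp.single (E, Fs) 1)
    (hT₂ : ∀ E Fs : Finset ι,
      T₂ (Finsupp.single (E, Fs) 1) = p ^ Fs.card • Finsupp.single (E, Fs) 1)
    (hL : ∀ E Fs : Finset ι,
      L (Finsupp.single (E, Fs) 1) =
        ∑ b ∈ Fs \ E, ((-p) ^ Theta {b} (Fs \ {b}) * (-1 : F) ^ Theta E {b}) •
          Finsupp.single (E ∪ {b}, Fs \ {b}) 1)
    (hR : ∀ E Fs : Finset ι,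
      R (Finsupp.single (E, Fs) 1) =
        ∑ a ∈ E \ Fs, ((-p) ^ Theta (E \ {a}) {a} * (-1 : F) ^ Theta {a} Fs) •
          Finsupp.single (E \ {a}, Fs ∪ {a}) 1) :
    (1 - p) • (R ∘ₗ L - L ∘ₗ R) = T₁ - T₂ := by
  apply Finsupp.lhom_ext
  rintro ⟨E, Fs⟩ c
  have hc : (Finsupp.single ((E, Fs)) c : (Finset ι × Finset ι) →₀ F)
      = c • Finsupp.single (E, Fs) 1 := by
    rw [Finsupp.smul_single, smul_eq_mul, mul_one]
  rw [hc, map_smul, map_smul]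
  congr 1
  simp only [LinearMap.smul_apply, LinearMap.sub_apply, LinearMap.coe_comp,
    Function.comp_apply, hT₁ E Fs, hT₂ E Fs]
  have hRL : R (L (Finsupp.single (E, Fs) 1))
      = (∑ b ∈ Fs \ E, p ^ RLAux.g E Fs b) • Finsupp.single (E, Fs) 1
        + ∑ b ∈ Fs \ E, ∑ a ∈ E \ Fs,
            (((-p) ^ Theta {b} (Fs \ {b}) * (-1 : F) ^ Theta E {b}) *
             ((-p) ^ Theta ((E ∪ {b}) \ {a}) {a} * (-1 : F) ^ Theta {a} (Fs \ {b}))) •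
            Finsupp.single ((E ∪ {b}) \ {a}, (Fs \ {b}) ∪ {a}) 1 := by
    rw [hL E Fs, map_sum]
    simp only [map_smul, hR]
    rw [Finset.sum_smul, ← Finset.sum_add_distrib]
    refine Finset.sum_congr rfl fun b hb => ?_
    obtain ⟨hbF, hbE⟩ := Finset.mem_sdiff.1 hb
    have hidx : (E ∪ {b}) \ (Fs \ {b}) = insert b (E \ Fs) := by
      ext y; by_cases hy : y = b <;>
        simp [Finset.mem_sdiff, Finset.mem_union, Finset.mem_singleton,
          Finset.mem_insert, hy, hbF, hbE] <;> tauto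
    have hbnot : b ∉ E \ Fs := fun h => hbE (Finset.mem_sdiff.1 h).1
    rw [hidx, Finset.sum_insert hbnot, smul_add, Finset.smul_sum]
    congr 1
    · rw [smul_smul, RLAux.diagRL p E Fs hbF hbE]
      have hEb : (E ∪ {b}) \ {b} = E := by
        rw [RLAux.union_singleton, RLAux.sdiff_singleton, Finset.erase_insert hbE]
      have hFb : (Fs \ {b}) ∪ {b} = Fs := by
        rw [RLAux.union_singleton, RLAux.sdiff_singleton, Finset.insert_erase hbF]
      rw [hEb, hFb]
    · refine Finset.sum_congr rfl fun a ha => ?_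
      rw [smul_smul]
  have hLR : L (R (Finsupp.single (E, Fs) 1))
      = (∑ a ∈ E \ Fs, p ^ RLAux.g E Fs a) • Finsupp.single (E, Fs) 1
        + ∑ a ∈ E \ Fs, ∑ b ∈ Fs \ E,
            (((-p) ^ Theta (E \ {a}) {a} * (-1 : F) ^ Theta {a} Fs) *
             ((-p) ^ Theta {b} ((Fs ∪ {a}) \ {b}) * (-1 : F) ^ Theta (E \ {a}) {b})) •
            Finsupp.single ((E \ {a}) ∪ {b}, (Fs ∪ {a}) \ {b}) 1 := by
    rw [hR E Fs, map_sum]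
    simp only [map_smul, hL]
    rw [Finset.sum_smul, ← Finset.sum_add_distrib]
    refine Finset.sum_congr rfl fun a ha => ?_
    obtain ⟨haE, haF⟩ := Finset.mem_sdiff.1 ha
    have hidx : (Fs ∪ {a}) \ (E \ {a}) = insert a (Fs \ E) := by
      ext y; by_cases hy : y = a <;>
        simp [Finset.mem_sdiff, Finset.mem_union, Finset.mem_singleton,
          Finset.mem_insert, hy, haE, haF] <;> tauto
    have hanot : a ∉ Fs \ E := fun h => haF (Finset.mem_sdiff.1 h).1
    rw [hidx, Finset.sum_insert hanot, smul_add, Finset.smul_sum]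
    congr 1
    · rw [smul_smul, RLAux.diagLR p E Fs haE haF]
      have hEa : (E \ {a}) ∪ {a} = E := by
        rw [RLAux.union_singleton, RLAux.sdiff_singleton, Finset.insert_erase haE]
      have hFa : (Fs ∪ {a}) \ {a} = Fs := by
        rw [RLAux.union_singleton, RLAux.sdiff_singleton, Finset.erase_insert haF]
      rw [hEa, hFa]
    · refine Finset.sum_congr rfl fun b hb => ?_
      rw [smul_smul]
  have hcross : (∑ b ∈ Fs \ E, ∑ a ∈ E \ Fs,
            (((-p) ^ Theta {b} (Fs \ {b}) * (-1 : F) ^ Theta E {b}) *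
             ((-p) ^ Theta ((E ∪ {b}) \ {a}) {a} * (-1 : F) ^ Theta {a} (Fs \ {b}))) •
            Finsupp.single ((E ∪ {b}) \ {a}, (Fs \ {b}) ∪ {a}) (1 : F))
      = ∑ a ∈ E \ Fs, ∑ b ∈ Fs \ E,
            (((-p) ^ Theta (E \ {a}) {a} * (-1 : F) ^ Theta {a} Fs) *
             ((-p) ^ Theta {b} ((Fs ∪ {a}) \ {b}) * (-1 : F) ^ Theta (E \ {a}) {b})) •
            Finsupp.single ((E \ {a}) ∪ {b}, (Fs ∪ {a}) \ {b}) 1 := by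
    rw [Finset.sum_comm]
    refine Finset.sum_congr rfl fun a ha => Finset.sum_congr rfl fun b hb => ?_
    obtain ⟨haE, haF⟩ := Finset.mem_sdiff.1 ha
    obtain ⟨hbF, hbE⟩ := Finset.mem_sdiff.1 hb
    have hab : a ≠ b := fun h => haF (h ▸ hbF)
    have hset1 : (E ∪ {b}) \ {a} = (E \ {a}) ∪ {b} := by
      simp only [RLAux.union_singleton, RLAux.sdiff_singleton]
      exact Finset.erase_insert_of_ne hab.symm
    have hset2 : (Fs \ {b}) ∪ {a} = (Fs ∪ {a}) \ {b} := by
      simp only [RLAux.union_singleton, RLAux.sdiff_singleton]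
      exact (Finset.erase_insert_of_ne hab).symm
    rw [RLAux.offdiag p E Fs haE haF hbF hbE, hset1, hset2]
  rw [hRL, hLR, hcross]
  have h1 : ∀ (A B : F) (X : (Finset ι × Finset ι) →₀ F),
      A • (Finsupp.single (E, Fs) (1 : F)) + X - (B • Finsupp.single (E, Fs) 1 + X)
        = (A - B) • Finsupp.single (E, Fs) 1 := fun A B X => by rw [sub_smul]; abel
  rw [h1, smul_smul, RLAux.key p (E ∪ Fs).card E Fs le_rfl, sub_smul]
end
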